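/- Let A' be the circulant graph C_12(1,2) with the blocks coloring (red on {0,1,2,6,7,8}, black elsewhere) and B' be C_12(1,2) with the alternating coloring (red on odd vertices, black on even vertices). Then color refinement (1-WL), started from these colorings, does not distinguish A' from B': at every iteration both graphs have the same multiset of vertex colors, namely 6 vertices of one color and 6 of the other, with both colorings being stable. -/
import Mathlib


/-- The multiset of colors (under coloring `c`) of the neighbors of `v` in `G`. -/
noncomputable def nbrColors {V : Type*} [Fintype V] (G : SimpleGraph V) (c : V → ℕ) (v : V) :
    Multiset ℕ :=
  letI := Classical.decRel G.Adj
  (G.neighborFinset v).val.map c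

/-- `C` is a run of color refinement (1-WL) on `G`: since colors are produced by an
injective `RELABEL` of the pair (old color, multiset of neighbors' old colors), two
vertices get equal new colors iff their pairs agree. -/
def IsCR {V : Type*} [Fintype V] (G : SimpleGraph V) (C : ℕ → V → ℕ) : Prop :=
  ∀ t v w, C (t + 1) v = C (t + 1) w ↔
    (C t v = C t w ∧ nbrColors G (C t) v = nbrColors G (C t) w)

/-- `CG`, `CH` is a parallel run of color refinement on `G` and `H`, with the injective
`RELABEL` applied consistently across both graphs. -/
def IsParallelCR {V W : Type*} [Fintype V] [Fintype W] (G : SimpleGraph V) (H : SimpleGraph W)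
    (CG : ℕ → V → ℕ) (CH : ℕ → W → ℕ) : Prop :=
  IsCR G CG ∧ IsCR H CH ∧
  ∀ t v w, CG (t + 1) v = CH (t + 1) w ↔
    (CG t v = CH t w ∧ nbrColors G (CG t) v = nbrColors H (CH t) w)

/-- The circulant graph `C₁₂(1,2)` on `ZMod 12`: `i ~ j` iff `i - j ≡ ±1, ±2 (mod 12)`. -/
def C12 : SimpleGraph (ZMod 12) := SimpleGraph.fromRel (fun i j => i - j = 1 ∨ i - j = 2)

/-- The blocks coloring as a ℕ-valued coloring: 1 (red) on `{0,1,2,6,7,8}`, 0 (black) else. -/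
def blocksColoring (i : ZMod 12) : ℕ :=
  if i.val = 0 ∨ i.val = 1 ∨ i.val = 2 ∨ i.val = 6 ∨ i.val = 7 ∨ i.val = 8 then 1 else 0

/-- The alternating coloring as a ℕ-valued coloring: 1 (red) on odd vertices, 0 else. -/
def altColoring (i : ZMod 12) : ℕ := i.val % 2

/-! ### Auxiliary material -/

instance : DecidableRel C12.Adj := fun a b =>
  decidable_of_iff _ (SimpleGraph.fromRel_adj (fun i j : ZMod 12 => i - j = 1 ∨ i - j = 2) a b).symm

theorem C12_adj_iff : ∀ v u : ZMod 12, C12.Adj v u ↔ u ∈ [v+1, v+2, v-1, v-2] := by decide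

theorem C12_nodup4 : ∀ v : ZMod 12, ([v+1, v+2, v-1, v-2] : List (ZMod 12)).Nodup := by decide

theorem perm3' (a b : ℕ) (s : Multiset ℕ) :
    b ::ₘ a ::ₘ b ::ₘ a ::ₘ s = a ::ₘ a ::ₘ b ::ₘ b ::ₘ s := by
  rw [Multiset.cons_swap b a, Multiset.cons_swap b a, Multiset.cons_swap b a]

theorem perm4' (a b : ℕ) (s : Multiset ℕ) :
    b ::ₘ b ::ₘ a ::ₘ a ::ₘ s = a ::ₘ a ::ₘ b ::ₘ b ::ₘ s := by
  rw [Multiset.cons_swap b a, Multiset.cons_swap b a, Multiset.cons_swap b a,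
    Multiset.cons_swap b a]

theorem nbrColors_eq (c : ZMod 12 → ℕ) (v : ZMod 12) :
    nbrColors C12 c v = {c (v+1), c (v+2), c (v-1), c (v-2)} := by
  have hval : ∀ inst : Fintype (C12.neighborSet v),
      (@SimpleGraph.neighborFinset _ C12 v inst).val = ↑[v+1, v+2, v-1, v-2] := by
    intro inst
    refine (Multiset.Nodup.ext (Finset.nodup _) (Multiset.coe_nodup.mpr (C12_nodup4 v))).mpr ?_
    intro a
    rw [Finset.mem_val, SimpleGraph.mem_neighborFinset, Multiset.mem_coe]
    exact C12_adj_iff v a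
  unfold nbrColors
  rw [hval]
  rfl

theorem nbr_blocks (c : ZMod 12 → ℕ)
    (h : ∀ i, c i = if blocksColoring i = 1 then c 0 else c 3) (v : ZMod 12) :
    nbrColors C12 c v = {c 0, c 0, c 3, c 3} := by
  rw [nbrColors_eq, h (v+1), h (v+2), h (v-1), h (v-2)]
  fin_cases v <;> simp (config := { decide := true }) [blocksColoring] <;>
    first | rfl | exact Multiset.cons_swap _ _ _ | exact perm4' _ _ _ | exact perm3' _ _ _

theorem nbr_alt (c : ZMod 12 → ℕ)
    (h : ∀ i, c i = if altColoring i = 1 then c 1 else c 0) (v : ZMod 12) :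
    nbrColors C12 c v = {c 1, c 1, c 0, c 0} := by
  rw [nbrColors_eq, h (v+1), h (v+2), h (v-1), h (v-2)]
  fin_cases v <;> simp (config := { decide := true }) [altColoring] <;>
    first | rfl | exact Multiset.cons_swap _ _ _ | exact perm4' _ _ _ | exact perm3' _ _ _

/-- An explicit bijection matching the blocks coloring with the alternating coloring. -/
def gmap (i : ZMod 12) : ZMod 12 :=
  if i.val = 0 then 1 else if i.val = 1 then 3 else if i.val = 2 then 5 else
  if i.val = 3 then 0 else if i.val = 4 then 2 else if i.val = 5 then 4 else
  if i.val = 6 then 7 else if i.val = 7 then 9 else if i.val = 8 then 11 else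
  if i.val = 9 then 6 else if i.val = 10 then 8 else 10

theorem gmap_prop : ∀ i, blocksColoring i = altColoring (gmap i) := by decide

theorem gmap_univ : (Finset.univ.val.map gmap : Multiset (ZMod 12)) = Finset.univ.val := by decide

theorem blocks01 : ∀ i : ZMod 12, blocksColoring i = 0 ∨ blocksColoring i = 1 := by decide

theorem alt01 : ∀ i : ZMod 12, altColoring i = 0 ∨ altColoring i = 1 := by decide

theorem card_blocks1 : ({v : ZMod 12 | blocksColoring v = blocksColoring 0}).ncard = 6 := by
  rw [Set.ncard_eq_toFinset_card']
  decide

theorem card_blocks0 : ({v : ZMod 12 | blocksColoring v = blocksColoring 3}).ncard = 6 := by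
  rw [Set.ncard_eq_toFinset_card']
  decide

/-- Color refinement does not distinguish `C₁₂(1,2)` with the blocks coloring from
`C₁₂(1,2)` with the alternating coloring: at every iteration the two graphs have equal
color multisets (6 vertices of one color and 6 of another), and both colorings are
stable under refinement. -/
theorem C12_blocks_alternating_indistinguishable
    (CA CB : ℕ → ZMod 12 → ℕ)
    (h0A : ∀ v w : ZMod 12, CA 0 v = CA 0 w ↔ blocksColoring v = blocksColoring w)
    (h0B : ∀ v w : ZMod 12, CB 0 v = CB 0 w ↔ altColoring v = altColoring w)
    (h0AB : ∀ v w : ZMod 12, CA 0 v = CB 0 w ↔ blocksColoring v = altColoring w)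
    (hCR : IsParallelCR C12 C12 CA CB) :
    (∀ t : ℕ, (Finset.univ.val.map (CA t)) = (Finset.univ.val.map (CB t))) ∧
    (∀ t : ℕ, ∃ c₁ c₂ : ℕ, c₁ ≠ c₂ ∧
      {v : ZMod 12 | CA t v = c₁}.ncard = 6 ∧ {v : ZMod 12 | CA t v = c₂}.ncard = 6) ∧
    (∀ (t : ℕ) (v w : ZMod 12), CA t v = CA t w ↔ blocksColoring v = blocksColoring w) ∧
    (∀ (t : ℕ) (v w : ZMod 12), CB t v = CB t w ↔ altColoring v = altColoring w) := by
  obtain ⟨hCRA, hCRB, hCRAB⟩ := hCR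
  have key : ∀ t, (∀ v w, CA t v = CA t w ↔ blocksColoring v = blocksColoring w) ∧
      (∀ v w, CB t v = CB t w ↔ altColoring v = altColoring w) ∧
      (∀ v w, CA t v = CB t w ↔ blocksColoring v = altColoring w) := by
    intro t
    induction t with
    | zero => exact ⟨h0A, h0B, h0AB⟩
    | succ t ih =>
      obtain ⟨PA, PB, PAB⟩ := ih
      have hA : ∀ i, CA t i = if blocksColoring i = 1 then CA t 0 else CA t 3 := by
        intro i
        rcases blocks01 i with h | h
        · rw [h, if_neg (by norm_num)]
          exact (PA i 3).2 (by rw [h]; rfl)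
        · rw [h, if_pos rfl]
          exact (PA i 0).2 (by rw [h]; rfl)
      have hB : ∀ i, CB t i = if altColoring i = 1 then CB t 1 else CB t 0 := by
        intro i
        rcases alt01 i with h | h
        · rw [h, if_neg (by norm_num)]
          exact (PB i 0).2 (by rw [h]; rfl)
        · rw [h, if_pos rfl]
          exact (PB i 1).2 (by rw [h]; rfl)
      have nA := nbr_blocks (CA t) hA
      have nB := nbr_alt (CB t) hB
      have e01 : CA t 0 = CB t 1 := (PAB 0 1).2 rfl
      have e30 : CA t 3 = CB t 0 := (PAB 3 0).2 rfl
      refine ⟨fun v w => ?_, fun v w => ?_, fun v w => ?_⟩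
      · rw [hCRA t v w, nA v, nA w]
        simp [PA v w]
      · rw [hCRB t v w, nB v, nB w]
        simp [PB v w]
      · rw [hCRAB t v w, nA v, nB w, e01, e30]
        simp [PAB v w]
  refine ⟨fun t => ?_, fun t => ?_, fun t => (key t).1, fun t => (key t).2.1⟩
  · have hgi : ∀ i, CA t i = CB t (gmap i) := fun i => ((key t).2.2 i (gmap i)).2 (gmap_prop i)
    calc Finset.univ.val.map (CA t)
        = Finset.univ.val.map ((CB t) ∘ gmap) :=
          Multiset.map_congr rfl (fun i _ => hgi i)
      _ = (Finset.univ.val.map gmap).map (CB t) := by rw [Multiset.map_map]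
      _ = Finset.univ.val.map (CB t) := by rw [gmap_univ]
  · refine ⟨CA t 0, CA t 3, ?_, ?_, ?_⟩
    · intro h
      exact absurd (((key t).1 0 3).1 h) (by decide)
    · have hs : {v : ZMod 12 | CA t v = CA t 0}
          = {v : ZMod 12 | blocksColoring v = blocksColoring 0} :=
        Set.ext fun v => (key t).1 v 0
      rw [hs]
      exact card_blocks1
    · have hs : {v : ZMod 12 | CA t v = CA t 3}
          = {v : ZMod 12 | blocksColoring v = blocksColoring 3} :=
        Set.ext fun v => (key t).1 v 3
      rw [hs]
      exact card_blocks0
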